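/- Let G be a finite bipartite graph with bipartition (U, W) and |U| = |W| ≥ 2. If for every nonempty proper subset X of U we have |N(X)| ≥ |X| + 1, then for every choice of u ∈ U and w ∈ W, the graph G − {u, w} has a perfect matching. -/

import Mathlib

/-- Lovász–Plummer (3)⇒(4): if a finite bipartite graph with bipartition `(U, W)`,
`|U| = |W| ≥ 2`, has the surplus property (`|N(X)| ≥ |X| + 1` for every nonempty proper
`X ⊆ U`), then for every `u ∈ U` and `w ∈ W` the graph with `u` and `w` deleted has a
perfect matching. -/
theorem surplus_implies_deleted_matching {V : Type*} [Fintype V] [DecidableEq V]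
    (G : SimpleGraph V) [DecidableRel G.Adj] (U W : Finset V)
    (hpart : ∀ v : V, (v ∈ U ∧ v ∉ W) ∨ (v ∈ W ∧ v ∉ U))
    (hbip : ∀ a b : V, G.Adj a b → (a ∈ U ∧ b ∈ W) ∨ (a ∈ W ∧ b ∈ U))
    (hUW : U.card = W.card) (hU2 : 2 ≤ U.card)
    (hsurplus : ∀ X ⊆ U, X.Nonempty → X ≠ U →
        X.card + 1 ≤ (W.filter (fun w => ∃ x ∈ X, G.Adj x w)).card) :
    ∀ u ∈ U, ∀ w ∈ W,
      ∃ M : (G.induce {x : V | x ≠ u ∧ x ≠ w}).Subgraph, M.IsPerfectMatching := by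
  classical
  intro u hu w hw
  set U' := U.erase u with hU'
  set W' := W.erase w with hW'
  -- Hall's condition for the relation on `U'` with neighborhoods in `W'`
  have hall : ∀ s : Finset {a : V // a ∈ U'},
      s.card ≤ (s.biUnion (fun a => W'.filter (fun y => G.Adj a.1 y))).card := by
    intro s
    rcases s.eq_empty_or_nonempty with rfl | hs
    · simp
    set X : Finset V := s.image (fun a => a.1) with hX
    have hXcard : X.card = s.card := Finset.card_image_of_injective _ Subtype.val_injective
    have hXU' : X ⊆ U' := by
      intro x hx
      rcases Finset.mem_image.mp hx with ⟨a, _, rfl⟩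
      exact a.2
    have hXU : X ⊆ U := hXU'.trans (Finset.erase_subset _ _)
    have hXne : X ≠ U := by
      intro h
      have : u ∈ X := h ▸ hu
      exact Finset.notMem_erase u U (hXU' this)
    have hXnonempty : X.Nonempty := hs.image _
    have hsur := hsurplus X hXU hXnonempty hXne
    have hsub : (W.filter (fun y => ∃ x ∈ X, G.Adj x y)).erase w ⊆
        s.biUnion (fun a => W'.filter (fun y => G.Adj a.1 y)) := by
      intro y hy
      rw [Finset.mem_erase, Finset.mem_filter] at hy
      obtain ⟨hyw, hyW, x, hxX, hadj⟩ := hy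
      rcases Finset.mem_image.mp hxX with ⟨a, haS, rfl⟩
      exact Finset.mem_biUnion.mpr ⟨a, haS,
        Finset.mem_filter.mpr ⟨Finset.mem_erase.mpr ⟨hyw, hyW⟩, hadj⟩⟩
    have h1 : (W.filter (fun y => ∃ x ∈ X, G.Adj x y)).card - 1 ≤
        ((W.filter (fun y => ∃ x ∈ X, G.Adj x y)).erase w).card :=
      Finset.pred_card_le_card_erase
    have h2 := Finset.card_le_card hsub
    omega
  obtain ⟨f, hfinj, hf⟩ :=
    (Finset.all_card_le_biUnion_card_iff_exists_injective
      (fun a : {a : V // a ∈ U'} => W'.filter (fun y => G.Adj a.1 y))).mp hall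
  have hfW' : ∀ a, f a ∈ W' := fun a => (Finset.mem_filter.mp (hf a)).1
  have hfadj : ∀ a, G.Adj a.1 (f a) := fun a => (Finset.mem_filter.mp (hf a)).2
  -- f is surjective onto W'
  have hcard : (Finset.univ.image f).card = W'.card := by
    rw [Finset.card_image_of_injective _ hfinj, Finset.card_univ, Fintype.card_coe,
      hU', hW', Finset.card_erase_of_mem hu, Finset.card_erase_of_mem hw, hUW]
  have himg : Finset.univ.image f = W' := by
    apply Finset.eq_of_subset_of_card_le
    · intro y hy
      rcases Finset.mem_image.mp hy with ⟨a, _, rfl⟩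
      exact hfW' a
    · omega
  have hsurj : ∀ y ∈ W', ∃ a, f a = y := by
    intro y hy
    rcases Finset.mem_image.mp (himg ▸ hy) with ⟨a, _, rfl⟩
    exact ⟨a, rfl⟩
  have huW : u ∉ W := ((hpart u).resolve_right (fun h => h.2 hu)).2
  have hwU : w ∉ U := ((hpart w).resolve_left (fun h => h.2 hw)).2
  -- build the matching
  refine ⟨{ verts := Set.univ
            Adj := fun a b => (∃ ha : a.1 ∈ U', f ⟨a.1, ha⟩ = b.1) ∨
                              (∃ hb : b.1 ∈ U', f ⟨b.1, hb⟩ = a.1)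
            adj_sub := ?_
            edge_vert := fun _ => trivial
            symm := ⟨fun a b h => h.symm.imp id id⟩ }, ?_, fun _ => trivial⟩
  · rintro a b (⟨ha, h⟩ | ⟨hb, h⟩)
    · show G.Adj a.1 b.1
      exact h ▸ hfadj ⟨a.1, ha⟩
    · show G.Adj a.1 b.1
      exact (h ▸ hfadj ⟨b.1, hb⟩).symm
  · rintro ⟨v, hvu, hvw⟩ _
    rcases hpart v with ⟨hvU, hvnW⟩ | ⟨hvW, hvnU⟩
    · -- v ∈ U
      have hv' : v ∈ U' := Finset.mem_erase.mpr ⟨hvu, hvU⟩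
      set y := f ⟨v, hv'⟩ with hy
      have hyW' := hfW' ⟨v, hv'⟩
      have hyW : y ∈ W := Finset.mem_of_mem_erase hyW'
      have hyu : y ≠ u := fun h => huW (h ▸ hyW)
      have hyw : y ≠ w := (Finset.mem_erase.mp hyW').1
      refine ⟨⟨y, hyu, hyw⟩, Or.inl ⟨hv', rfl⟩, ?_⟩
      rintro ⟨z, hz⟩ (⟨ha, h⟩ | ⟨hb, h⟩)
      · exact Subtype.ext h.symm
      · exact absurd (Finset.mem_of_mem_erase (hfW' ⟨z, hb⟩) : f ⟨z, hb⟩ ∈ W)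
          (h ▸ hvnW)
    · -- v ∈ W
      have hv' : v ∈ W' := Finset.mem_erase.mpr ⟨hvw, hvW⟩
      obtain ⟨a, hfa⟩ := hsurj v hv'
      have haU : a.1 ∈ U := Finset.mem_of_mem_erase a.2
      have hau : a.1 ≠ u := (Finset.mem_erase.mp a.2).1
      have haw : a.1 ≠ w := fun h => hwU (h ▸ haU)
      refine ⟨⟨a.1, hau, haw⟩, Or.inr ⟨a.2, by simpa using hfa⟩, ?_⟩
      rintro ⟨z, hz⟩ (⟨ha, h⟩ | ⟨hb, h⟩)
      · exact absurd ha (by simp [hU', Finset.mem_erase, hvnU])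
      · have : (⟨z, hb⟩ : {a : V // a ∈ U'}) = a := hfinj (by rw [h, hfa])
        exact Subtype.ext (congrArg Subtype.val this : z = a.1)
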